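/- Let P be a symmetric convex polygon with vertices P_1,...,P_{2n} (P_{i+n}=-P_i, [P_i,P_{i+1}]>0, [∇P_i,ΔP_i]>0) and Q_i = ΔP_i/[P_i,P_{i+1}] its dual. Then [Q_{i-1}, Q_i] > 0 for all i, i.e., the dual polygon is also positively oriented. -/
import Mathlib


/-- Determinant of the 2×2 matrix with columns `v` and `w`. -/
noncomputable def det2 (v w : ℝ × ℝ) : ℝ := v.1 * w.2 - v.2 * w.1

theorem stmt_1 (n : ℕ) (hn : 0 < n) (P Q : ℤ → ℝ × ℝ)
    (hper : ∀ i, P (i + 2 * n) = P i)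
    (hconv : ∀ i, 0 < det2 (P i) (P (i + 1)))
    (hloc : ∀ i, 0 < det2 (P i - P (i - 1)) (P (i + 1) - P i))
    (hsym : ∀ i, P (i + n) = -P i)
    (hQ : ∀ i, Q i = (det2 (P i) (P (i + 1)))⁻¹ • (P (i + 1) - P i)) :
    ∀ i, 0 < det2 (Q (i - 1)) (Q i) := by
  intro i
  have h1 := hconv (i - 1)
  have h2 := hconv i
  have h3 := hloc i
  rw [hQ, hQ]
  simp only [det2, Prod.smul_fst, Prod.smul_snd, smul_eq_mul, Prod.fst_sub, Prod.snd_sub,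
    sub_add_cancel] at *
  nlinarith [mul_pos (mul_pos (inv_pos.2 h1) (inv_pos.2 h2)) h3,
    inv_pos.2 h1, inv_pos.2 h2]
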